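/- Let H_m = Σ_{i=1}^{m} 1/i denote the m-th harmonic number, and for each integer n ≥ 1 let k_n be the largest integer k with 0 ≤ k ≤ n and H_n − H_{n−k} ≤ 1. Then there is a constant C > 0 such that for every n ≥ 1, |k_n + (n − k_n)(1 − H_n + H_{n−k_n}) − ((1 − 1/e)n + 1/2 − 1/(2e))| ≤ C/n. -/

import Mathlib

open scoped Classical

noncomputable section

/-- The element of `c` minimizing `key`, if `c` is nonempty. -/
def pickMin {n : ℕ} {α : Type*} [LinearOrder α] (key : Fin n → α)
    (c : Finset (Fin n)) : Option (Fin n) :=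
  if h : c.Nonempty then some (Classical.choose (Finset.exists_min_image c key h)) else none

/-- The set of matched `V`-vertices after the first `j` arrivals of the online greedy
process on the bipartite graph with `U`-side arrival order `u_0, u_1, …` and adjacency
`adj`, in which each arriving `u_j` is matched to its currently unmatched neighbor
minimizing `key` (if any). -/
def greedyRun {n : ℕ} {α : Type*} [LinearOrder α] (adj : ℕ → Fin n → Prop)
    (key : Fin n → α) : ℕ → Finset (Fin n)
  | 0 => ∅
  | j + 1 =>
    match pickMin key ((Finset.univ.filter fun i => adj j i) \ greedyRun adj key j) with
    | some v => insert v (greedyRun adj key j)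
    | none => greedyRun adj key j

/-- The `V`-vertex that the arriving vertex `u_j` (0-indexed) gets matched to, if any. -/
def greedyMatchU {n : ℕ} {α : Type*} [LinearOrder α] (adj : ℕ → Fin n → Prop)
    (key : Fin n → α) (j : ℕ) : Option (Fin n) :=
  pickMin key ((Finset.univ.filter fun i => adj j i) \ greedyRun adj key j)

/-- Adjacency of the monotone graph `MonotoneG` (0-indexed):
`u_j` is adjacent to `v_i` iff `j ≤ i`. -/
def monoAdj (n : ℕ) : ℕ → Fin n → Prop := fun j i => j ≤ (i : ℕ)

/-- The set of matched `V`-vertices produced by the Ranking greedy process on `MonotoneG`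
with permutation `π` (where `π i` is the rank of `v_i`, 0-indexed). -/
def rankMatched (n : ℕ) (π : Equiv.Perm (Fin n)) : Finset (Fin n) :=
  greedyRun (monoAdj n) (fun i => π i) n

/-- `x(π)`: the number of edges of the matching produced by Ranking on `MonotoneG`. -/
def xSize (n : ℕ) (π : Equiv.Perm (Fin n)) : ℕ := (rankMatched n π).card

/-- `a(n) = Σ_π x(π)`, over all `n!` permutations. -/
def aVal (n : ℕ) : ℕ := ∑ π : Equiv.Perm (Fin n), xSize n π

/-- `a(n,i)` (with `i` 1-indexed): the number of permutations `π` of `{1,…,n}` for which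
the vertex of rank `i` under `π` is matched by the Ranking greedy process on `MonotoneG`. -/
def aIdx (n i : ℕ) : ℕ :=
  (Finset.univ.filter fun π : Equiv.Perm (Fin n) =>
    ∃ v : Fin n, (π v : ℕ) = i - 1 ∧ v ∈ rankMatched n π).card

/-- `d(m,i)` (with `i` 1-indexed): the number of permutations of `{1,…,m}` all of whose
fixed points (if any) lie among the first `i` items. -/
def dIdx (m i : ℕ) : ℕ :=
  (Finset.univ.filter fun σ : Equiv.Perm (Fin m) => ∀ x, σ x = x → (x : ℕ) < i).card

/-- `d(m)`: the number of derangements of `{1,…,m}`. -/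
def numDer (m : ℕ) : ℕ :=
  (Finset.univ.filter fun σ : Equiv.Perm (Fin m) => ∀ x, σ x ≠ x).card

/-- The key for the greedy-by-price process: buy the cheapest available item,
breaking ties in favor of the smaller index. -/
def priceKey {n : ℕ} (p : Fin n → ℝ) : Fin n → Lex (ℝ × ℕ) := fun i => toLex (p i, (i : ℕ))

/-- The utility `y(u_j)` of buyer `u_j` (0-indexed) in the greedy-by-price process:
`1 - p v` if `u_j` buys item `v`, and `0` if `u_j` remains unmatched. -/
def utility (n : ℕ) (adj : ℕ → Fin n → Prop) (p : Fin n → ℝ) (j : ℕ) : ℝ :=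
  (greedyMatchU adj (priceKey p) j).elim 0 (fun v => 1 - p v)

/-- The revenue `r(v)` from item `v` in the greedy-by-price process:
`p v` if `v` is sold, and `0` otherwise. -/
def revenue (n : ℕ) (adj : ℕ → Fin n → Prop) (p : Fin n → ℝ) (v : Fin n) : ℝ :=
  if v ∈ greedyRun adj (priceKey p) n then p v else 0

/-- The `m`-th harmonic number `H_m = Σ_{i=1}^m 1/i` (with `H_0 = 0`). -/
def harm (m : ℕ) : ℝ := ∑ i ∈ Finset.range m, (1 : ℝ) / (i + 1)

open Real in
lemma pade_log' (a b : ℝ) (ha : 0 < a) (hab : a ≤ b) :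
    2*(b-a)/(a+b) ≤ Real.log (b/a) ∧ Real.log (b/a) ≤ (b-a)*(1/a+1/b)/2 := by
  have hb : 0 < b := lt_of_lt_of_le ha hab
  have hμ : (0:ℝ) < a + b := by linarith
  have hne : ∀ x : ℝ, x ∈ Set.uIcc a b → x ≠ 0 := by
    intro x hx
    rw [Set.uIcc_of_le hab] at hx
    exact ne_of_gt (lt_of_lt_of_le ha hx.1)
  have hint : IntervalIntegrable (fun x => 1/x) MeasureTheory.volume a b :=
    intervalIntegral.intervalIntegrable_one_div hne (by fun_prop)
  have hlog : (∫ x in a..b, 1/x) = Real.log (b/a) := integral_one_div (by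
    intro h; exact (hne 0 h) rfl)
  have hcont : ∀ A B : ℝ, Continuous (fun x : ℝ => A - B*x) := by
    intro A B; continuity
  have hlin : ∀ A B : ℝ, (∫ x in a..b, (A - B*x)) = A*(b-a) - B*((b^2-a^2)/2) := by
    intro A B
    rw [intervalIntegral.integral_sub (f := fun _ => A) (g := fun x => B * x) intervalIntegrable_const
      ((continuous_const.mul continuous_id').intervalIntegrable a b),
      intervalIntegral.integral_const, intervalIntegral.integral_const_mul, integral_id]
    simp only [smul_eq_mul]
    ring
  constructor
  · -- lower bound: tangent at midpoint
    have hmono : (∫ x in a..b, ((2/(a+b) + (a+b)/2*(4/(a+b)^2)) - (4/(a+b)^2)*x)) ≤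
        ∫ x in a..b, 1/x := by
      apply intervalIntegral.integral_mono_on hab
        (Continuous.intervalIntegrable (hcont _ _) a b) hint
      intro x hx
      have hx0 : 0 < x := lt_of_lt_of_le ha hx.1
      have key : 1/x - ((2/(a+b) + (a+b)/2*(4/(a+b)^2)) - (4/(a+b)^2)*x)
          = 4*(x-(a+b)/2)^2/(x*(a+b)^2) := by
        field_simp
        ring
      nlinarith [div_nonneg (mul_nonneg (by norm_num : (0:ℝ) ≤ 4) (sq_nonneg (x-(a+b)/2)))
        (le_of_lt (mul_pos hx0 (pow_pos hμ 2))), key]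
    rw [hlin] at hmono
    rw [← hlog]
    refine le_trans (le_of_eq ?_) hmono
    field_simp
    ring
  · -- upper bound: secant
    have hmono : (∫ x in a..b, 1/x) ≤
        ∫ x in a..b, ((1/a + 1/b) - (1/(a*b))*x) := by
      apply intervalIntegral.integral_mono_on hab hint
        (Continuous.intervalIntegrable (hcont _ _) a b)
      intro x hx
      have hx0 : 0 < x := lt_of_lt_of_le ha hx.1
      have key : ((1/a + 1/b) - (1/(a*b))*x) - 1/x = (x-a)*(b-x)/(a*b*x) := by
        field_simp
        ring
      nlinarith [div_nonneg (mul_nonneg (sub_nonneg.2 hx.1) (sub_nonneg.2 hx.2))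
        (le_of_lt (mul_pos (mul_pos ha hb) hx0)), key]
    rw [hlin] at hmono
    rw [← hlog]
    refine le_trans hmono (le_of_eq ?_)
    field_simp
    ring

lemma term_bounds' (i : ℕ) :
    1/((i:ℝ)+1) ≤ Real.log (2*(i:ℝ)+3) - Real.log (2*(i:ℝ)+1) ∧
    Real.log (2*(i:ℝ)+3) - Real.log (2*(i:ℝ)+1) ≤ 1/((i:ℝ)+1) + 1/(3*((i:ℝ)+1)^3) := by
  set x : ℝ := (i:ℝ) with hx
  have hx0 : 0 ≤ x := Nat.cast_nonneg i
  have ha : (0:ℝ) < 2*x+1 := by linarith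
  have hb : (0:ℝ) < 2*x+3 := by linarith
  have h := pade_log' (2*x+1) (2*x+3) ha (by linarith)
  have hlog : Real.log ((2*x+3)/(2*x+1)) = Real.log (2*x+3) - Real.log (2*x+1) :=
    Real.log_div (ne_of_gt hb) (ne_of_gt ha)
  rw [hlog] at h
  constructor
  · refine le_trans (le_of_eq ?_) h.1
    field_simp
    ring
  · refine le_trans h.2 ?_
    have expand : (2*x+3-(2*x+1))*(1/(2*x+1)+1/(2*x+3))/2 = (4*x+4)/((2*x+1)*(2*x+3)) := by
      field_simp
      ring
    rw [expand, div_add_div _ _ (by positivity) (by positivity),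
      div_le_div_iff₀ (by positivity) (by positivity)]
    nlinarith [hx0, sq_nonneg x]

lemma sum_Ico_tele' (f : ℕ → ℝ) (m n : ℕ) (h : m ≤ n) :
    ∑ i ∈ Finset.Ico m n, (f (i+1) - f i) = f n - f m := by
  rw [Finset.sum_Ico_eq_sub _ h, Finset.sum_range_sub, Finset.sum_range_sub]
  ring

lemma harm_sub' (m n : ℕ) (h : m ≤ n) :
    harm n - harm m = ∑ i ∈ Finset.Ico m n, (1:ℝ)/(i+1) := by
  rw [harm, harm, eq_comm, Finset.sum_Ico_eq_sub _ h]

lemma harm_log' (m n : ℕ) (hm : 1 ≤ m) (hmn : m ≤ n) :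
    harm n - harm m ≤ Real.log (2*(n:ℝ)+1) - Real.log (2*(m:ℝ)+1) ∧
    Real.log (2*(n:ℝ)+1) - Real.log (2*(m:ℝ)+1) ≤ harm n - harm m + 1/(6*(m:ℝ)^2) := by
  have htele : ∑ i ∈ Finset.Ico m n, (Real.log (2*((i:ℝ)+1)+1) - Real.log (2*(i:ℝ)+1))
      = Real.log (2*(n:ℝ)+1) - Real.log (2*(m:ℝ)+1) := by
    have := sum_Ico_tele' (fun i => Real.log (2*(i:ℝ)+1)) m n hmn
    simp only [Nat.cast_add, Nat.cast_one] at this ⊢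
    exact this
  have hsub := harm_sub' m n hmn
  have e : ∀ i : ℕ, (2*((i:ℝ)+1)+1) = 2*(i:ℝ)+3 := fun i => by ring
  constructor
  · rw [hsub, ← htele]
    apply Finset.sum_le_sum
    intro i _
    rw [e i]
    exact (term_bounds' i).1
  · have step : ∑ i ∈ Finset.Ico m n, (Real.log (2*((i:ℝ)+1)+1) - Real.log (2*(i:ℝ)+1))
        ≤ ∑ i ∈ Finset.Ico m n, ((1:ℝ)/(i+1) + 1/(3*((i:ℝ)+1)^3)) := by
      apply Finset.sum_le_sum
      intro i _
      rw [e i]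
      exact (term_bounds' i).2
    rw [Finset.sum_add_distrib] at step
    have cube : ∑ i ∈ Finset.Ico m n, (1:ℝ)/(3*((i:ℝ)+1)^3) ≤ 1/(6*(m:ℝ)^2) := by
      have tele2 : ∑ i ∈ Finset.Ico m n, ((1:ℝ)/(6*(i:ℝ)*((i:ℝ)+1)) - 1/(6*((i:ℝ)+1)*((i:ℝ)+2)))
          = 1/(6*(m:ℝ)*((m:ℝ)+1)) - 1/(6*(n:ℝ)*((n:ℝ)+1)) := by
        have h2 := sum_Ico_tele' (fun i => -(1/(6*(i:ℝ)*((i:ℝ)+1)))) m n hmn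
        simp only [Nat.cast_add, Nat.cast_one] at h2
        have e2 : ∀ i ∈ Finset.Ico m n, (-(1/(6*((i:ℝ)+1)*((i:ℝ)+1+1))) - -(1/(6*(i:ℝ)*((i:ℝ)+1))))
            = ((1:ℝ)/(6*(i:ℝ)*((i:ℝ)+1)) - 1/(6*((i:ℝ)+1)*((i:ℝ)+2))) := by
          intro i _; ring
        rw [Finset.sum_congr rfl e2] at h2
        rw [h2]; ring
      have hper : ∀ i ∈ Finset.Ico m n, (1:ℝ)/(3*((i:ℝ)+1)^3)
          ≤ (1:ℝ)/(6*(i:ℝ)*((i:ℝ)+1)) - 1/(6*((i:ℝ)+1)*((i:ℝ)+2)) := by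
        intro i hi
        have hi1 : 1 ≤ i := le_trans hm (Finset.mem_Ico.1 hi).1
        have hi1' : (1:ℝ) ≤ (i:ℝ) := by exact_mod_cast hi1
        have key : (1:ℝ)/(6*(i:ℝ)*((i:ℝ)+1)) - 1/(6*((i:ℝ)+1)*((i:ℝ)+2))
            = 1/(3*((i:ℝ)*((i:ℝ)+1)*((i:ℝ)+2))) := by
          rw [div_sub_div _ _ (by positivity) (by positivity)]
          rw [div_eq_div_iff (by positivity) (by positivity)]
          ring
        rw [key, div_le_div_iff₀ (by positivity) (by positivity)]
        nlinarith [hi1']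
      have hm' : (1:ℝ) ≤ (m:ℝ) := by exact_mod_cast hm
      have hn' : (1:ℝ) ≤ (n:ℝ) := by exact_mod_cast (le_trans hm hmn)
      have last : 1/(6*(m:ℝ)*((m:ℝ)+1)) - 1/(6*(n:ℝ)*((n:ℝ)+1)) ≤ 1/(6*(m:ℝ)^2) := by
        have p1 : (0:ℝ) < 6*(n:ℝ)*((n:ℝ)+1) := by positivity
        have p2 : 1/(6*(m:ℝ)*((m:ℝ)+1)) ≤ 1/(6*(m:ℝ)^2) := by
          apply one_div_le_one_div_of_le (by positivity)
          nlinarith [hm']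
        have p3 : (0:ℝ) ≤ 1/(6*(n:ℝ)*((n:ℝ)+1)) := by positivity
        linarith
      calc ∑ i ∈ Finset.Ico m n, (1:ℝ)/(3*((i:ℝ)+1)^3)
          ≤ ∑ i ∈ Finset.Ico m n, ((1:ℝ)/(6*(i:ℝ)*((i:ℝ)+1)) - 1/(6*((i:ℝ)+1)*((i:ℝ)+2))) :=
            Finset.sum_le_sum hper
        _ = 1/(6*(m:ℝ)*((m:ℝ)+1)) - 1/(6*(n:ℝ)*((n:ℝ)+1)) := tele2
        _ ≤ 1/(6*(m:ℝ)^2) := last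
    rw [hsub]
    rw [htele] at step
    linarith [step, cube]

lemma exp_est' (u : ℝ) (h : |u| ≤ 1) : |(1+u)*Real.exp (-u) - 1| ≤ u^2 := by
  obtain ⟨h1, h2⟩ := abs_le.1 h
  rw [abs_le]
  constructor
  · rcases le_or_gt 0 u with hu | hu
    · have he : 1 - u ≤ Real.exp (-u) := by
        have := Real.add_one_le_exp (-u); linarith
      nlinarith [Real.exp_pos (-u)]
    · have he : 1 + (-u)/2 ≤ Real.exp ((-u)/2) := by
        have := Real.add_one_le_exp ((-u)/2); linarith
      have hsq : Real.exp (-u) = Real.exp ((-u)/2) * Real.exp ((-u)/2) := by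
        rw [← Real.exp_add]; ring_nf
      have hpos : (0:ℝ) ≤ 1 + (-u)/2 := by linarith
      have key : (1 + (-u)/2)^2 ≤ Real.exp (-u) := by
        rw [hsq]; nlinarith [Real.exp_pos ((-u)/2)]
      nlinarith [key]
  · have he : 1 + u ≤ Real.exp u := by
      have := Real.add_one_le_exp u; linarith
    have hm : (1+u) * Real.exp (-u) ≤ Real.exp u * Real.exp (-u) :=
      mul_le_mul_of_nonneg_right he (le_of_lt (Real.exp_pos _))
    rw [← Real.exp_add] at hm
    simp at hm
    nlinarith [sq_nonneg u]

lemma big_core' (ν mR s T L u : ℝ)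
    (hν16 : (16:ℝ) ≤ ν) (hmR1 : 1 ≤ mR) (hm16 : ν ≤ 16*mR)
    (hTdef : T = (2*ν+1)*Real.exp (-1)/2 - 1/2)
    (hM : 2*mR+1 = (2*ν+1)*Real.exp (-1)*Real.exp (-u))
    (hLu : L = 1 + u)
    (huabs : |u| ≤ 1/mR)
    (hLs0 : s ≤ L) (hLs1 : L ≤ s + 1/(6*mR^2)) :
    |T - mR*s| ≤ 1000/ν := by
  have hmR0 : (0:ℝ) < mR := by linarith
  have hν0 : (0:ℝ) < ν := by linarith
  have hu1 : |u| ≤ 1 := le_trans huabs (by rw [div_le_one hmR0]; exact hmR1)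
  obtain ⟨hD1, hD2⟩ := abs_le.1 (exp_est' u hu1)
  have hinvU : Real.exp (-1) ≤ 1/2 := by
    rw [Real.exp_neg]
    have he2 : (2:ℝ) ≤ Real.exp 1 := by have := Real.add_one_le_exp 1; linarith
    have := inv_anti₀ (by norm_num : (0:ℝ) < 2) he2
    simpa using this
  have hinv0 : (0:ℝ) < Real.exp (-1) := Real.exp_pos _
  have hid : mR*L - T = ((2*ν+1)*Real.exp (-1)/2)*((1+u)*Real.exp (-u) - 1) - u/2 := by
    have hmval : mR = ((2*ν+1)*Real.exp (-1)*Real.exp (-u) - 1)/2 := by linarith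
    rw [hmval, hTdef, hLu]
    ring
  have hA0 : (0:ℝ) ≤ (2*ν+1)*Real.exp (-1)/2 := by positivity
  have hA2 : (2*ν+1)*Real.exp (-1)/2 ≤ 2*ν := by
    have := mul_le_mul_of_nonneg_left hinvU (by linarith : (0:ℝ) ≤ 2*ν+1)
    linarith
  have p1 : ((2*ν+1)*Real.exp (-1)/2)*((1+u)*Real.exp (-u) - 1)
      ≤ ((2*ν+1)*Real.exp (-1)/2)*u^2 := mul_le_mul_of_nonneg_left hD2 hA0
  have p2 : ((2*ν+1)*Real.exp (-1)/2)*(-u^2)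
      ≤ ((2*ν+1)*Real.exp (-1)/2)*((1+u)*Real.exp (-u) - 1) :=
    mul_le_mul_of_nonneg_left hD1 hA0
  have p3 : ((2*ν+1)*Real.exp (-1)/2)*u^2 ≤ (2*ν)*u^2 :=
    mul_le_mul_of_nonneg_right hA2 (sq_nonneg u)
  have pm0 : 0 ≤ mR*(L-s) := mul_nonneg (le_of_lt hmR0) (by linarith)
  have pm1 : mR*(L-s) ≤ 1/(6*mR) := by
    have q : mR*(L-s) ≤ mR*(1/(6*mR^2)) :=
      mul_le_mul_of_nonneg_left (by linarith) (le_of_lt hmR0)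
    have qe : mR*(1/(6*mR^2)) = 1/(6*mR) := by
      field_simp
    rw [qe] at q
    exact q
  have hsplit : T - mR*s = -(mR*L - T) + mR*(L-s) := by ring
  have e1 : ((2*ν+1)*Real.exp (-1)/2)*(-u^2) = -(((2*ν+1)*Real.exp (-1)/2)*u^2) := by ring
  have hXub : ((2*ν+1)*Real.exp (-1)/2)*((1+u)*Real.exp (-u) - 1) ≤ 2*ν*u^2 := le_trans p1 p3
  have hXlb : -(2*ν*u^2) ≤ ((2*ν+1)*Real.exp (-1)/2)*((1+u)*Real.exp (-u) - 1) := by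
    linarith [p2, p3, e1]
  have habs : |T - mR*s| ≤ 2*ν*u^2 + |u|/2 + 1/(6*mR) := by
    rw [abs_le]
    constructor
    · linarith [hsplit, hid, hXub, neg_abs_le u, pm0]
    · linarith [hsplit, hid, hXlb, le_abs_self u, pm1]
  have hfin : 2*ν*u^2 + |u|/2 + 1/(6*mR) ≤ 1000/ν := by
    have r0 : (0:ℝ) ≤ |u| := abs_nonneg u
    have hr1 : |u| * ν ≤ 16 := by
      have h1m : |u| * ν ≤ (1/mR)*ν := mul_le_mul_of_nonneg_right huabs (le_of_lt hν0)
      have h2m : (1/mR)*ν ≤ 16 := by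
        rw [one_div, inv_mul_eq_div, div_le_iff₀ hmR0]
        linarith
      linarith
    have r1 : (|u| * ν)*(|u| * ν) ≤ 256 := by
      have := mul_le_mul hr1 hr1 (mul_nonneg r0 (le_of_lt hν0)) (by norm_num : (0:ℝ) ≤ 16)
      linarith
    have e3 : (|u| * ν)*(|u| * ν) = u^2*ν^2 := by
      rw [← sq_abs u]; ring
    have t1 : 2*ν*u^2 ≤ 512/ν := by
      rw [le_div_iff₀ hν0]
      linarith [r1, e3]
    have t2 : |u|/2 ≤ 8/ν := by
      rw [div_le_div_iff₀ (by norm_num : (0:ℝ) < 2) hν0]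
      linarith [hr1]
    have t3 : 1/(6*mR) ≤ 3/ν := by
      rw [div_le_div_iff₀ (by positivity : (0:ℝ) < 6*mR) hν0]
      linarith
    have hsum : 512/ν + 8/ν + 3/ν = 523/ν := by ring
    have h523 : (523:ℝ)/ν ≤ 1000/ν := (div_le_div_iff_of_pos_right hν0).2 (by norm_num)
    linarith
  linarith

lemma small_core' (ν T x : ℝ) (hν1 : 1 ≤ ν) (hν15 : ν ≤ 15)
    (hT0 : 0 ≤ T) (hTn : T ≤ ν) (hx0 : 0 ≤ x) (hxn : x ≤ ν) :
    |T - x| ≤ 1000/ν := by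
  have hν0 : (0:ℝ) < ν := by linarith
  have hdiv : ν ≤ 1000/ν := by
    rw [le_div_iff₀ hν0]; nlinarith
  rw [abs_le]
  constructor <;> linarith

lemma big_glue' (n m : ℕ) (hm1 : 1 ≤ m) (hmn : m ≤ n) (hν16 : (16:ℝ) ≤ (n:ℝ))
    (s T : ℝ)
    (hsdef : s = harm n - harm m)
    (hTdef : T = (2*(n:ℝ)+1) * Real.exp (-1) / 2 - 1/2)
    (hslb : 1 - 1/(m:ℝ) < s) (hsub : s ≤ 1) :
    |T - (m:ℝ)*s| ≤ 1000/(n:ℝ) := by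
  have hmR1 : (1:ℝ) ≤ (m:ℝ) := by exact_mod_cast hm1
  have hmR0 : (0:ℝ) < (m:ℝ) := by linarith
  have hν0 : (0:ℝ) < (n:ℝ) := by linarith
  have he1 : (0:ℝ) < Real.exp 1 := Real.exp_pos 1
  have he2 : (2:ℝ) ≤ Real.exp 1 := by
    have := Real.add_one_le_exp 1; linarith
  obtain ⟨hL1, hL2⟩ := harm_log' m n hm1 hmn
  obtain ⟨L, hLdef⟩ : ∃ L : ℝ, L = Real.log (2*(n:ℝ)+1) - Real.log (2*(m:ℝ)+1) := ⟨_, rfl⟩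
  rw [← hLdef, ← hsdef] at hL1 hL2
  obtain ⟨u, hudef⟩ : ∃ u : ℝ, u = L - 1 := ⟨_, rfl⟩
  have hLu : L = 1 + u := by rw [hudef]; ring
  have hm2pos : (0:ℝ) < 6*(m:ℝ)^2 := by positivity
  have h6m : 1/(6*(m:ℝ)^2) ≤ 1/(m:ℝ) := by
    rw [div_le_div_iff₀ hm2pos hmR0]
    nlinarith
  have huub : u ≤ 1/(6*(m:ℝ)^2) := by rw [hudef]; linarith
  have hulb : -(1/(m:ℝ)) ≤ u := by
    rw [hudef]
    have h1m0 : (0:ℝ) < 1/(m:ℝ) := by positivity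
    linarith
  have huabs : |u| ≤ 1/(m:ℝ) := abs_le.2 ⟨hulb, le_trans huub h6m⟩
  have hM0 : (0:ℝ) < 2*(m:ℝ)+1 := by linarith
  have hN0' : (0:ℝ) < 2*(n:ℝ)+1 := by linarith
  have hRpos : (0:ℝ) < (2*(n:ℝ)+1)/(2*(m:ℝ)+1) := by positivity
  have hLlog : Real.log ((2*(n:ℝ)+1)/(2*(m:ℝ)+1)) = L := by
    rw [hLdef, Real.log_div (ne_of_gt hN0') (ne_of_gt hM0)]
  have hL32 : L ≤ 3/2 := by
    have h16 : 1/(6*(m:ℝ)^2) ≤ 1/6 := by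
      rw [div_le_div_iff₀ hm2pos (by norm_num)]
      nlinarith
    linarith
  have hR8 : (2*(n:ℝ)+1)/(2*(m:ℝ)+1) ≤ 8 := by
    have h32 : Real.log ((2*(n:ℝ)+1)/(2*(m:ℝ)+1)) ≤ 2 := by rw [hLlog]; linarith
    have hle := (Real.log_le_iff_le_exp hRpos).1 h32
    have hexp2 : Real.exp 2 ≤ 8 := by
      have h2 : Real.exp 2 = Real.exp 1 * Real.exp 1 := by
        rw [← Real.exp_add]; norm_num
      have hlt : Real.exp 1 < 2.7182818286 := Real.exp_one_lt_d9
      nlinarith [he1, hlt]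
    linarith
  have hm16 : (n:ℝ) ≤ 16*(m:ℝ) := by
    rw [div_le_iff₀ hM0] at hR8
    linarith
  have hexpL : Real.exp L = (2*(n:ℝ)+1)/(2*(m:ℝ)+1) := by
    rw [← hLlog, Real.exp_log hRpos]
  have hMval : 2*(m:ℝ)+1 = (2*(n:ℝ)+1) * Real.exp (-1) * Real.exp (-u) := by
    have h2 : (2*(m:ℝ)+1) * Real.exp L = 2*(n:ℝ)+1 := by
      rw [hexpL]; field_simp
    have h3 : Real.exp (-1) * Real.exp (-u) * Real.exp L = 1 := by
      rw [← Real.exp_add, ← Real.exp_add, hLu,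
        show (-1 + -u + (1+u) : ℝ) = 0 by ring, Real.exp_zero]
    calc 2*(m:ℝ)+1 = (2*(m:ℝ)+1) * (Real.exp (-1) * Real.exp (-u) * Real.exp L) := by
          rw [h3]; ring
      _ = ((2*(m:ℝ)+1) * Real.exp L) * (Real.exp (-1) * Real.exp (-u)) := by ring
      _ = (2*(n:ℝ)+1) * Real.exp (-1) * Real.exp (-u) := by rw [h2]; ring
  exact big_core' (n:ℝ) (m:ℝ) s T L u hν16 hmR1 hm16 hTdef hMval hLu huabs hL1 hL2

/-- With `H_m` the `m`-th harmonic number and, for each `n ≥ 1`, `k_n` the largest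
integer `k` with `0 ≤ k ≤ n` and `H_n − H_{n−k} ≤ 1`, there is a constant `C > 0` such
that for every `n ≥ 1`,
`|k_n + (n − k_n)(1 − H_n + H_{n−k_n}) − ((1 − 1/e)n + 1/2 − 1/(2e))| ≤ C/n`. -/
theorem stmt_11 :
    ∃ C : ℝ, 0 < C ∧ ∀ n : ℕ, 1 ≤ n → ∀ k : ℕ, k ≤ n →
      harm n - harm (n - k) ≤ 1 →
      (∀ k' : ℕ, k' ≤ n → harm n - harm (n - k') ≤ 1 → k' ≤ k) →
      |(k : ℝ) + ((n : ℝ) - (k : ℝ)) * (1 - harm n + harm (n - k)) -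
        ((1 - 1 / Real.exp 1) * n + 1 / 2 - 1 / (2 * Real.exp 1))| ≤ C / n := by
  refine ⟨1000, by norm_num, ?_⟩
  intro n hn k hk h1 hmax
  obtain ⟨m, hmdef⟩ : ∃ m : ℕ, m = n - k := ⟨_, rfl⟩
  rw [← hmdef] at h1 ⊢
  have hmn : m ≤ n := hmdef ▸ Nat.sub_le n k
  have hν1 : (1:ℝ) ≤ (n:ℝ) := by exact_mod_cast hn
  have hν0 : (0:ℝ) < (n:ℝ) := by linarith
  have hkR : (k:ℝ) = (n:ℝ) - (m:ℝ) := by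
    have : (m:ℝ) = (n:ℝ) - (k:ℝ) := by
      rw [hmdef]; push_cast [Nat.cast_sub hk]; ring
    linarith
  obtain ⟨s, hsdef⟩ : ∃ s : ℝ, s = harm n - harm m := ⟨_, rfl⟩
  have h1' : s ≤ 1 := by rw [hsdef]; exact h1
  have hs0 : 0 ≤ s := by
    rw [hsdef, harm_sub' m n hmn]
    exact Finset.sum_nonneg (fun i _ => by positivity)
  have he1 : (0:ℝ) < Real.exp 1 := Real.exp_pos 1
  have he2 : (2:ℝ) ≤ Real.exp 1 := by
    have := Real.add_one_le_exp 1; linarith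
  have hlt3 : Real.exp 1 ≤ (3:ℝ) := le_of_lt (lt_trans Real.exp_one_lt_d9 (by norm_num))
  have hinvU : Real.exp (-1) ≤ 1/2 := by
    rw [Real.exp_neg]
    have := inv_anti₀ (by norm_num : (0:ℝ) < 2) he2
    simpa using this
  have hinvL : (1:ℝ)/3 ≤ Real.exp (-1) := by
    rw [Real.exp_neg]
    have := inv_anti₀ he1 hlt3
    simpa [one_div] using this
  obtain ⟨T, hTdef⟩ : ∃ T : ℝ, T = (2*(n:ℝ)+1) * Real.exp (-1) / 2 - 1/2 := ⟨_, rfl⟩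
  have hgoal : (k : ℝ) + ((n : ℝ) - (k : ℝ)) * (1 - harm n + harm m) -
        ((1 - 1 / Real.exp 1) * n + 1 / 2 - 1 / (2 * Real.exp 1))
      = T - (m:ℝ) * s := by
    rw [hkR, hTdef, hsdef, Real.exp_neg]
    field_simp
    ring
  rw [hgoal]
  rcases lt_or_ge n 16 with hsmall | hbig
  · -- small case: n ≤ 15
    have hn15 : (n:ℝ) ≤ 15 := by exact_mod_cast Nat.lt_succ_iff.1 hsmall
    have hT0 : 0 ≤ T := by
      have := mul_le_mul_of_nonneg_left hinvL (by linarith : (0:ℝ) ≤ 2*(n:ℝ)+1)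
      rw [hTdef]; linarith
    have hTn : T ≤ (n:ℝ) := by
      have := mul_le_mul_of_nonneg_left hinvU (by linarith : (0:ℝ) ≤ 2*(n:ℝ)+1)
      rw [hTdef]; linarith
    have hmcast : (0:ℝ) ≤ (m:ℝ) := Nat.cast_nonneg m
    have hmR : (m:ℝ) ≤ (n:ℝ) := by exact_mod_cast hmn
    have hms : 0 ≤ (m:ℝ) * s := mul_nonneg hmcast hs0
    have hmsu : (m:ℝ) * s ≤ (n:ℝ) := by nlinarith
    exact small_core' (n:ℝ) T ((m:ℝ)*s) hν1 hn15 hT0 hTn hms hmsu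
  · -- big case: n ≥ 16
    have hν16 : (16:ℝ) ≤ (n:ℝ) := by exact_mod_cast hbig
    have hm1 : 1 ≤ m := by
      by_contra hc
      have hm0 : m = 0 := by omega
      have h2n : 2 ≤ n := by omega
      have harm2 : harm 2 = 3/2 := by
        simp [harm, Finset.sum_range_succ]
        norm_num
      have hmono : 0 ≤ harm n - harm 2 := by
        rw [harm_sub' 2 n h2n]
        exact Finset.sum_nonneg (fun i _ => by positivity)
      have h0 : harm 0 = 0 := by simp [harm]
      rw [hsdef, hm0, h0] at h1'
      linarith
    have hmR1 : (1:ℝ) ≤ (m:ℝ) := by exact_mod_cast hm1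
    have hmR0 : (0:ℝ) < (m:ℝ) := by linarith
    have hk1n : k + 1 ≤ n := by omega
    have hstep : n - (k+1) = m - 1 := by omega
    have hstrict : 1 < harm n - harm (m - 1) := by
      by_contra hc
      push_neg at hc
      have := hmax (k+1) hk1n (by rw [hstep]; exact hc)
      omega
    have hmsucc : harm m = harm (m-1) + 1/(m:ℝ) := by
      have hsucc : m - 1 + 1 = m := by omega
      have hcast : ((m-1:ℕ):ℝ) = (m:ℝ) - 1 := by
        push_cast [Nat.cast_sub hm1]; ring
      conv_lhs => rw [← hsucc]
      rw [harm, Finset.sum_range_succ, ← harm, hcast]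
      ring_nf
    have hslb : 1 - 1/(m:ℝ) < s := by
      rw [hsdef]; linarith
    exact big_glue' n m hm1 hmn hν16 s T hsdef hTdef hslb h1'
end
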